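/- arXiv:2101.02734 — 2 statements merged into one kernel-verified Lean document; each statement's English description precedes it below -/
import Mathlib

section
/- Let g, h be bounded nonnegative measurable functions (h on [0,w*], g on [0,w*]²), let W₁, W₂, ... be i.i.d. random variables with distribution μ on [0,w*], and define S₀(w) = h(w), S_{i+1}(w) = S_i(w) + g(w, W_{i+1}). Let g̃(x) = E[g(x,W)] and g̃₊ = sup_{x} g̃(x). Then for any w ∈ [0,w*] and λ ≥ g̃₊, one has ∑_{k=1}^∞ E[∏_{i=0}^{k-1} S_i(w)/(S_i(w)+λ)] = h(w)/(λ - g̃(w)), where the right-hand side is interpreted as +∞ when λ = g̃₊ = g̃(w). -/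
open MeasureTheory Filter Finset

lemma aux_not_summable {L a Jc : ℝ} (hL : 0 < L) (ha : 0 < a) (hJ : 0 ≤ Jc) :
    ¬ Summable (fun k : ℕ => L / (a + k * Jc)) := by
  intro hs
  have haJ : 0 < a + Jc := by linarith
  have h1 : Summable (fun k : ℕ => (L / (a + Jc)) * (1 / ((k : ℝ) + 1))) := by
    refine hs.of_nonneg_of_le (fun k => by positivity) (fun k => ?_)
    have hk0 : (0:ℝ) < (k : ℝ) + 1 := by positivity
    have hden : 0 < a + k * Jc := by positivity
    rw [div_mul_div_comm, mul_one]
    apply div_le_div_of_nonneg_left hL.le hden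
    nlinarith [Nat.cast_nonneg (α := ℝ) k]
  have h2 : Summable (fun k : ℕ => 1 / ((k : ℝ) + 1)) := by
    have hne : L / (a + Jc) ≠ 0 := by positivity
    have h := h1.mul_left (L / (a + Jc))⁻¹
    exact h.congr fun k => inv_mul_cancel_left₀ hne _
  have h3 : Summable (fun n : ℕ => 1 / (n : ℝ)) := by
    have := (summable_nat_add_iff (f := fun n : ℕ => 1 / (n : ℝ)) 1).mp
    apply this
    simpa [Nat.cast_add] using h2
  exact Real.not_summable_one_div_natCast h3

/-- Lemma 1.4: for the companion fitness process `S_i(w)` built from bounded nonnegative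
measurable functions `g, h` and i.i.d. `μ`-distributed weights `W₁, W₂, …`, for every
`w ∈ [0, w*]` and every `λ ≥ g̃₊ := sup_{x ∈ [0,w*]} g̃(x)` (where `g̃(x) = E[g(x,W)]`),
`∑_{k=1}^∞ E[∏_{i=0}^{k-1} S_i(w)/(S_i(w)+λ)] = h(w)/(λ - g̃(w))`,
the right-hand side (in `ℝ≥0∞`) being infinite when `λ = g̃₊ = g̃(w)` (and `h(w) > 0`). -/
theorem companion_process_geometric_sum
    {Ω : Type*} [MeasurableSpace Ω] (P : Measure Ω) [IsProbabilityMeasure P]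
    (wstar : ℝ) (μ : Measure ℝ) [IsProbabilityMeasure μ]
    (hsupp : ∀ᵐ x ∂μ, x ∈ Set.Icc 0 wstar)
    (g : ℝ → ℝ → ℝ) (h : ℝ → ℝ) (J : ℝ)
    (hgmeas : Measurable (Function.uncurry g)) (hhmeas : Measurable h)
    (hg0 : ∀ x y, 0 ≤ g x y) (hgJ : ∀ x y, g x y ≤ J)
    (hh0 : ∀ x, 0 ≤ h x) (hhJ : ∀ x, h x ≤ J)
    (W : ℕ → Ω → ℝ) (hWmeas : ∀ i, Measurable (W i))
    (hWid : ∀ i, P.map (W i) = μ)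
    (hWindep : ProbabilityTheory.iIndepFun W P)
    (gtilde : ℝ → ℝ) (hgtilde : ∀ x, gtilde x = ∫ y, g x y ∂μ)
    (S : ℝ → ℕ → Ω → ℝ)
    (hS : ∀ w i ω, S w i ω = h w + ∑ j ∈ Finset.range i, g w (W (j + 1) ω))
    (w : ℝ) (hw : w ∈ Set.Icc 0 wstar)
    (lam : ℝ) (hlam : ∀ x ∈ Set.Icc 0 wstar, gtilde x ≤ lam) :
    (∑' k : ℕ, ∫⁻ ω, ENNReal.ofReal
        (∏ i ∈ Finset.range (k + 1), S w i ω / (S w i ω + lam)) ∂P)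
      = ENNReal.ofReal (h w) / ENNReal.ofReal (lam - gtilde w) := by
  -- basic facts
  have hgwmeas : Measurable (g w) := hgmeas.comp measurable_prodMk_left
  have hJ0 : (0:ℝ) ≤ J := (hg0 0 0).trans (hgJ 0 0)
  have hG0 : 0 ≤ gtilde w := by
    rw [hgtilde]; exact integral_nonneg fun y => hg0 w y
  have hGlam : gtilde w ≤ lam := hlam w hw
  have hlam0 : (0:ℝ) ≤ lam := hG0.trans hGlam
  have hSmeas : ∀ i, Measurable (S w i) := by
    intro i
    have : S w i = fun ω => h w + ∑ j ∈ Finset.range i, g w (W (j + 1) ω) :=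
      funext (hS w i)
    rw [this]
    exact measurable_const.add
      (Finset.measurable_sum _ fun j _ => hgwmeas.comp (hWmeas (j + 1)))
  have hS0 : ∀ i ω, 0 ≤ S w i ω := by
    intro i ω; rw [hS]
    exact add_nonneg (hh0 w) (Finset.sum_nonneg fun j _ => hg0 w _)
  have hSle : ∀ i ω, S w i ω ≤ h w + i * J := by
    intro i ω; rw [hS]
    have : ∑ j ∈ Finset.range i, g w (W (j + 1) ω) ≤ ∑ j ∈ Finset.range i, J :=
      Finset.sum_le_sum fun j _ => hgJ w _
    simpa using add_le_add_left (this.trans_eq (by simp [mul_comm])) (h w)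
  have hSsucc : ∀ k ω, S w (k + 1) ω = S w k ω + g w (W (k + 1) ω) := by
    intro k ω; rw [hS, hS, Finset.sum_range_succ]; ring
  have hS0eq : ∀ ω, S w 0 ω = h w := by intro ω; rw [hS]; simp
  -- the product process
  set T : ℕ → Ω → ℝ := fun k ω => ∏ i ∈ Finset.range k, S w i ω / (S w i ω + lam)
    with hTdef
  have hfac0 : ∀ i ω, 0 ≤ S w i ω / (S w i ω + lam) :=
    fun i ω => div_nonneg (hS0 i ω) (add_nonneg (hS0 i ω) hlam0)
  have hfac1 : ∀ i ω, S w i ω / (S w i ω + lam) ≤ 1 := by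
    intro i ω
    rcases eq_or_lt_of_le (add_nonneg (hS0 i ω) hlam0) with he | hp
    · rw [← he, div_zero]; exact zero_le_one
    · exact div_le_one_of_le₀ (le_add_of_nonneg_right hlam0) hp.le
  have hTmeas : ∀ k, Measurable (T k) := fun k =>
    Finset.measurable_prod _ fun i _ =>
      (hSmeas i).div ((hSmeas i).add measurable_const)
  have hT0 : ∀ k ω, 0 ≤ T k ω := fun k ω =>
    Finset.prod_nonneg fun i _ => hfac0 i ω
  have hT1 : ∀ k ω, T k ω ≤ 1 := fun k ω =>
    Finset.prod_le_one (fun i _ => hfac0 i ω) (fun i _ => hfac1 i ω)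
  have hTsucc : ∀ k ω, T (k + 1) ω = T k ω * (S w k ω / (S w k ω + lam)) := by
    intro k ω; rw [hTdef]; exact Finset.prod_range_succ _ _
  -- integrability
  have hbdd_int : ∀ (f : Ω → ℝ) (c : ℝ), Measurable f → (∀ ω, 0 ≤ f ω) →
      (∀ ω, f ω ≤ c) → Integrable f P := by
    intro f c hf h0 hc
    refine (integrable_const c).mono' hf.aestronglyMeasurable (ae_of_all _ fun ω => ?_)
    rw [Real.norm_eq_abs, abs_of_nonneg (h0 ω)]
    exact hc ω
  have hTint : ∀ k, Integrable (T k) P :=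
    fun k => hbdd_int _ 1 (hTmeas k) (hT0 k) (hT1 k)
  have hTSint : ∀ k j, Integrable (fun ω => T k ω * S w j ω) P := by
    intro k j
    refine hbdd_int _ (h w + j * J) ((hTmeas k).mul (hSmeas j))
      (fun ω => mul_nonneg (hT0 k ω) (hS0 j ω)) (fun ω => ?_)
    calc T k ω * S w j ω ≤ 1 * S w j ω :=
          mul_le_mul_of_nonneg_right (hT1 k ω) (hS0 j ω)
      _ = S w j ω := one_mul _
      _ ≤ h w + j * J := hSle j ω
  -- the two real sequences
  set t : ℕ → ℝ := fun k => ∫ ω, T k ω ∂P with htdef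
  set u : ℕ → ℝ := fun k => ∫ ω, T k ω * S w k ω ∂P with hudef
  have ht0 : ∀ k, 0 ≤ t k := fun k => integral_nonneg (hT0 k)
  have hu0' : ∀ k, 0 ≤ u k :=
    fun k => integral_nonneg fun ω => mul_nonneg (hT0 k ω) (hS0 k ω)
  have hu_zero : u 0 = h w := by
    have h1 : (fun ω => T 0 ω * S w 0 ω) = fun _ => h w := by
      funext ω; rw [hTdef]; simp [hS0eq ω]
    show (∫ ω, T 0 ω * S w 0 ω ∂P) = h w
    rw [h1, integral_const]; simp
  -- pointwise identity T (k+1) (S k + lam) = T k * S k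
  have hpt : ∀ k ω, T (k + 1) ω * (S w k ω + lam) = T k ω * S w k ω := by
    intro k ω
    rw [hTsucc]
    rcases eq_or_lt_of_le (add_nonneg (hS0 k ω) hlam0) with he | hp
    · have h1 : S w k ω = 0 := by
        have := hS0 k ω; nlinarith
      rw [← he, h1]; ring
    · field_simp
  -- L1 : u k = ∫ T(k+1) * S k + lam * t(k+1)
  have hL1 : ∀ k, u k = (∫ ω, T (k + 1) ω * S w k ω ∂P) + lam * t (k + 1) := by
    intro k
    have e1 : ∀ ω, T k ω * S w k ω = T (k + 1) ω * S w k ω + lam * T (k + 1) ω := by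
      intro ω; linear_combination (hpt k ω).symm
    show (∫ ω, T k ω * S w k ω ∂P) = _
    calc (∫ ω, T k ω * S w k ω ∂P)
        = ∫ ω, (T (k + 1) ω * S w k ω + lam * T (k + 1) ω) ∂P :=
          integral_congr_ae (ae_of_all _ e1)
      _ = (∫ ω, T (k + 1) ω * S w k ω ∂P) + ∫ ω, lam * T (k + 1) ω ∂P :=
          integral_add (hTSint (k + 1) k) ((hTint (k + 1)).const_mul lam)
      _ = (∫ ω, T (k + 1) ω * S w k ω ∂P) + lam * t (k + 1) := by
          rw [integral_const_mul]
  -- L2 independence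
  have hL2 : ∀ k, (∫ ω, T (k + 1) ω * g w (W (k + 1) ω) ∂P) = t (k + 1) * gtilde w := by
    intro k
    have hdisj : Disjoint (Finset.range (k + 1)) ({k + 1} : Finset ℕ) := by
      simp only [Finset.disjoint_left, Finset.mem_range, Finset.mem_singleton]
      omega
    have hbase := hWindep.indepFun_finset (Finset.range (k + 1)) {k + 1} hdisj hWmeas
    set e : ({x // x ∈ Finset.range (k + 1)} → ℝ) → ℕ → ℝ :=
      fun v n => if hn : n ∈ Finset.range (k + 1) then v ⟨n, hn⟩ else 0 with hedef
    have hemeas : ∀ n, Measurable fun v => e v n := by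
      intro n
      by_cases hn : n ∈ Finset.range (k + 1)
      · simp only [hedef, dif_pos hn]; exact measurable_pi_apply _
      · simp only [hedef, dif_neg hn]; exact measurable_const
    set Φ : ({x // x ∈ Finset.range (k + 1)} → ℝ) → ℝ :=
      fun v => ∏ i ∈ Finset.range (k + 1),
        (h w + ∑ j ∈ Finset.range i, g w (e v (j + 1))) /
        ((h w + ∑ j ∈ Finset.range i, g w (e v (j + 1))) + lam) with hPhidef
    have hPhimeas : Measurable Φ := by
      refine Finset.measurable_prod _ fun i _ => ?_
      have hA : Measurable fun v : ({x // x ∈ Finset.range (k + 1)} → ℝ) =>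
          h w + ∑ j ∈ Finset.range i, g w (e v (j + 1)) :=
        measurable_const.add
          (Finset.measurable_sum _ fun j _ => hgwmeas.comp (hemeas (j + 1)))
      exact hA.div (hA.add measurable_const)
    set Ψ : ({x // x ∈ ({k + 1} : Finset ℕ)} → ℝ) → ℝ :=
      fun v => g w (v ⟨k + 1, Finset.mem_singleton_self _⟩) with hPsidef
    have hPsimeas : Measurable Ψ := hgwmeas.comp (measurable_pi_apply _)
    have hX : T (k + 1) = Φ ∘ (fun ω (i : {x // x ∈ Finset.range (k + 1)}) => W i ω) := by
      funext ω
      show T (k + 1) ω = Φ fun i : {x // x ∈ Finset.range (k + 1)} => W i ω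
      rw [hTdef, hPhidef]
      refine Finset.prod_congr rfl fun i hi => ?_
      have hSi : S w i ω = h w + ∑ j ∈ Finset.range i,
          g w (e (fun i' : {x // x ∈ Finset.range (k + 1)} => W i' ω) (j + 1)) := by
        rw [hS]
        congr 1
        refine Finset.sum_congr rfl fun j hj => ?_
        have hj1 : j + 1 ∈ Finset.range (k + 1) := by
          simp only [Finset.mem_range] at hi hj ⊢; omega
        rw [hedef]
        simp only [dif_pos hj1]
      rw [hSi]
    have hY : (fun ω => g w (W (k + 1) ω))
        = Ψ ∘ (fun ω (i : {x // x ∈ ({k + 1} : Finset ℕ)}) => W i ω) := rfl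
    have hindep : ProbabilityTheory.IndepFun (T (k + 1))
        (fun ω => g w (W (k + 1) ω)) P := by
      rw [hX, hY]
      exact hbase.comp hPhimeas hPsimeas
    have hmul := ProbabilityTheory.IndepFun.integral_mul_eq_mul_integral hindep (hTmeas (k + 1)).aestronglyMeasurable
      (hgwmeas.comp (hWmeas (k + 1))).aestronglyMeasurable
    have hgW : (∫ ω, g w (W (k + 1) ω) ∂P) = gtilde w := by
      rw [hgtilde, ← hWid (k + 1),
        integral_map (hWmeas (k + 1)).aemeasurable hgwmeas.aestronglyMeasurable]
    calc (∫ ω, T (k + 1) ω * g w (W (k + 1) ω) ∂P)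
        = (∫ ω, T (k + 1) ω ∂P) * ∫ ω, g w (W (k + 1) ω) ∂P := by
          simpa [Pi.mul_apply] using hmul
      _ = t (k + 1) * gtilde w := by rw [hgW]
  -- L3 recursion
  have hgWint : ∀ k, Integrable (fun ω => T (k + 1) ω * g w (W (k + 1) ω)) P := by
    intro k
    refine hbdd_int _ J ((hTmeas (k + 1)).mul (hgwmeas.comp (hWmeas (k + 1))))
      (fun ω => mul_nonneg (hT0 (k + 1) ω) (hg0 w _)) (fun ω => ?_)
    calc T (k + 1) ω * g w (W (k + 1) ω) ≤ 1 * g w (W (k + 1) ω) :=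
          mul_le_mul_of_nonneg_right (hT1 (k + 1) ω) (hg0 w _)
      _ = g w (W (k + 1) ω) := one_mul _
      _ ≤ J := hgJ w _
  have hL3 : ∀ k, u (k + 1) = u k - (lam - gtilde w) * t (k + 1) := by
    intro k
    have e1 : ∀ ω, T (k + 1) ω * S w (k + 1) ω
        = T (k + 1) ω * S w k ω + T (k + 1) ω * g w (W (k + 1) ω) := by
      intro ω; rw [hSsucc]; ring
    have e2 : u (k + 1) = (∫ ω, T (k + 1) ω * S w k ω ∂P) + t (k + 1) * gtilde w := by
      show (∫ ω, T (k + 1) ω * S w (k + 1) ω ∂P) = _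
      rw [integral_congr_ae (ae_of_all _ e1),
        integral_add (hTSint (k + 1) k) (hgWint k), hL2 k]
    rw [e2, hL1 k]; ring
  -- L4 partial sums
  have hL4 : ∀ N, (lam - gtilde w) * ∑ k ∈ Finset.range N, t (k + 1) = h w - u N := by
    intro N
    induction N with
    | zero => simp [hu_zero]
    | succ n ih => rw [Finset.sum_range_succ, mul_add, ih, hL3 n]; ring
  -- bounds relating u and t
  have huT : ∀ k, u k ≤ (h w + k * J + lam) * t (k + 1) := by
    intro k
    have e0 : u k = ∫ ω, T (k + 1) ω * (S w k ω + lam) ∂P := by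
      show (∫ ω, T k ω * S w k ω ∂P) = _
      exact integral_congr_ae (ae_of_all _ fun ω => (hpt k ω).symm)
    have hint1 : Integrable (fun ω => T (k + 1) ω * (S w k ω + lam)) P := by
      refine hbdd_int _ (h w + k * J + lam)
        ((hTmeas (k + 1)).mul ((hSmeas k).add measurable_const))
        (fun ω => mul_nonneg (hT0 _ ω) (add_nonneg (hS0 k ω) hlam0)) (fun ω => ?_)
      calc T (k + 1) ω * (S w k ω + lam) ≤ 1 * (S w k ω + lam) :=
            mul_le_mul_of_nonneg_right (hT1 _ ω) (add_nonneg (hS0 k ω) hlam0)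
        _ = S w k ω + lam := one_mul _
        _ ≤ h w + k * J + lam := add_le_add_left (hSle k ω) lam
    rw [e0]
    calc (∫ ω, T (k + 1) ω * (S w k ω + lam) ∂P)
        ≤ ∫ ω, (h w + k * J + lam) * T (k + 1) ω ∂P := by
          refine integral_mono hint1 ((hTint (k + 1)).const_mul _) fun ω => ?_
          rw [mul_comm ((h w : ℝ) + k * J + lam)]
          exact mul_le_mul_of_nonneg_left (add_le_add_left (hSle k ω) lam) (hT0 _ ω)
      _ = (h w + k * J + lam) * t (k + 1) := integral_const_mul _ _
  have huT' : ∀ k, u k ≤ (h w + k * J) * t k := by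
    intro k
    calc u k ≤ ∫ ω, (h w + k * J) * T k ω ∂P := by
          refine integral_mono (hTSint k k) ((hTint k).const_mul _) fun ω => ?_
          rw [mul_comm ((h w : ℝ) + k * J)]
          exact mul_le_mul_of_nonneg_left (hSle k ω) (hT0 _ ω)
      _ = (h w + k * J) * t k := integral_const_mul _ _
  -- rewrite LHS
  have hLHS : (∑' k : ℕ, ∫⁻ ω, ENNReal.ofReal
        (∏ i ∈ Finset.range (k + 1), S w i ω / (S w i ω + lam)) ∂P)
      = ∑' k : ℕ, ENNReal.ofReal (t (k + 1)) := by
    refine tsum_congr fun k => ?_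
    exact (ofReal_integral_eq_lintegral_ofReal (hTint (k + 1))
      (ae_of_all _ (hT0 (k + 1)))).symm
  rw [hLHS]
  -- case h w = 0
  by_cases hH : h w = 0
  · have hTzero : ∀ k ω, T (k + 1) ω = 0 := by
      intro k ω
      rw [hTdef]
      refine Finset.prod_eq_zero (Finset.mem_range.mpr (Nat.succ_pos k)) ?_
      rw [hS0eq ω, hH]
      simp
    have htz : ∀ k, t (k + 1) = 0 := by
      intro k
      show (∫ ω, T (k + 1) ω ∂P) = 0
      simp [hTzero k]
    rw [hH]
    simp [htz, ENNReal.zero_div]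
  have hHpos : 0 < h w := lt_of_le_of_ne (hh0 w) (Ne.symm hH)
  rcases eq_or_lt_of_le hGlam with hcrit | hsub
  · -- critical case lam = gtilde w
    have hc0 : lam - gtilde w = 0 := by rw [← hcrit]; ring
    have hRHS : ENNReal.ofReal (h w) / ENNReal.ofReal (lam - gtilde w) = ⊤ := by
      rw [hc0, ENNReal.ofReal_zero, ENNReal.div_zero]
      rw [Ne, ENNReal.ofReal_eq_zero, not_le]
      exact hHpos
    rw [hRHS]
    have hueq : ∀ k, u k = h w := by
      intro k
      induction k with
      | zero => exact hu_zero
      | succ n ih => rw [hL3 n, hc0, ih]; ring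
    have hub : ∀ k : ℕ, h w / (h w + ((k : ℝ) + 1) * J) ≤ t (k + 1) := by
      intro k
      have h1 := huT' (k + 1)
      rw [hueq (k + 1)] at h1
      push_cast at h1
      have hpos : 0 < h w + ((k : ℝ) + 1) * J := by positivity
      rw [div_le_iff₀ hpos]
      nlinarith [ht0 (k + 1)]
    have htop : (∑' k : ℕ, ENNReal.ofReal (h w / (h w + ((k : ℝ) + 1) * J))) = ⊤ := by
      by_contra hne
      have hsum := ENNReal.summable_toReal hne
      have hsum2 : Summable (fun k : ℕ => h w / (h w + ((k : ℝ) + 1) * J)) := by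
        refine hsum.congr fun k => ?_
        exact ENNReal.toReal_ofReal (by positivity)
      have hF := aux_not_summable hHpos hHpos hJ0
      refine hF ((summable_nat_add_iff 1).mp ?_)
      refine hsum2.congr fun n => ?_
      push_cast
      ring_nf
    refine top_le_iff.mp ?_
    rw [← htop]
    exact ENNReal.tsum_le_tsum fun k => ENNReal.ofReal_le_ofReal (hub k)
  · -- subcritical case gtilde w < lam
    have hcpos : 0 < lam - gtilde w := sub_pos.mpr hsub
    have hpart : ∀ N, ∑ k ∈ Finset.range N, t (k + 1) = (h w - u N) / (lam - gtilde w) := by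
      intro N
      rw [eq_div_iff hcpos.ne', ← hL4 N]
      ring
    have hbound : ∀ N, ∑ k ∈ Finset.range N, t (k + 1) ≤ h w / (lam - gtilde w) := by
      intro N
      rw [hpart N]
      gcongr <;> linarith [hu0' N]
    have hsummable : Summable (fun k => t (k + 1)) :=
      summable_of_sum_range_le (fun k => ht0 (k + 1)) hbound
    have hanti : Antitone u := antitone_nat_of_succ_le fun n => by
      rw [hL3 n]
      nlinarith [ht0 (n + 1)]
    have hbddb : BddBelow (Set.range u) := ⟨0, by rintro x ⟨k, rfl⟩; exact hu0' k⟩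
    have hulim : Tendsto u atTop (nhds (⨅ k, u k)) := tendsto_atTop_ciInf hanti hbddb
    have hL0 : 0 ≤ ⨅ k, u k := le_ciInf hu0'
    have hLle : ∀ k, (⨅ k, u k) ≤ u k := fun k => ciInf_le hbddb k
    have hLzero : (⨅ k, u k) = 0 := by
      by_contra hL
      have hLpos : 0 < ⨅ k, u k := lt_of_le_of_ne hL0 (Ne.symm hL)
      have hcmp : ∀ k : ℕ, (⨅ k, u k) / ((h w + lam) + k * J) ≤ t (k + 1) := by
        intro k
        have h1 := huT k
        have h2 := hLle k
        have hpos : 0 < (h w + lam) + (k : ℝ) * J := by positivity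
        rw [div_le_iff₀ hpos]
        nlinarith [ht0 (k + 1)]
      exact aux_not_summable hLpos (by positivity : (0:ℝ) < h w + lam) hJ0
        (hsummable.of_nonneg_of_le (fun k => by positivity) hcmp)
    have hval : (∑' k, t (k + 1)) = h w / (lam - gtilde w) := by
      have h1 : Tendsto (fun N => ∑ k ∈ Finset.range N, t (k + 1)) atTop
          (nhds ((h w - 0) / (lam - gtilde w))) := by
        have h2 := ((tendsto_const_nhds (x := h w)).sub hulim).div_const (lam - gtilde w)
        rw [hLzero] at h2
        refine h2.congr fun N => (hpart N).symm
      have h3 := hsummable.hasSum.tendsto_sum_nat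
      have := tendsto_nhds_unique h3 h1
      simpa using this
    rw [← ENNReal.ofReal_tsum_of_nonneg (fun k => ht0 (k + 1)) hsummable, hval,
      ENNReal.ofReal_div_of_pos hcpos]
end

section
/- With the companion process S_i(W) started from a μ-random weight W, if g and h are bounded by J' and λ* > g̃₊ := sup_x E[g(x,W)], then lim_{k→∞} k · E[∏_{i=0}^{k-1} S_i(W)/(S_i(W)+λ*)] = 0. -/
open MeasureTheory Filter Finset

/-- Integrability of bounded measurable functions on a finite measure space. -/
lemma aux_integrable_of_bounds {α : Type*} [MeasurableSpace α] {ν : Measure α}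
    [IsFiniteMeasure ν] {f : α → ℝ} {C : ℝ}
    (hm : AEStronglyMeasurable f ν) (hb : ∀ a, |f a| ≤ C) : Integrable f ν :=
  (integrable_const C).mono' hm (Filter.Eventually.of_forall fun a => by
    rw [Real.norm_eq_abs]; exact hb a)

/-- If a nonnegative antitone sequence has bounded partial sums, then `k * a k → 0`. -/
lemma aux_tendsto_nat_mul (a : ℕ → ℝ) (h0 : ∀ k, 0 ≤ a k) (hanti : ∀ k, a (k + 1) ≤ a k)
    (C : ℝ) (hC : ∀ N, ∑ k ∈ range N, a k ≤ C) :
    Tendsto (fun k : ℕ => (k : ℝ) * a k) atTop (nhds 0) := by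
  have hsum : Summable a := summable_of_sum_range_le h0 hC
  have hAnti : Antitone a := antitone_nat_of_succ_le hanti
  rw [Metric.tendsto_atTop]
  intro ε hε
  have htail := tendsto_sum_nat_add a
  rw [Metric.tendsto_atTop] at htail
  obtain ⟨N₀, hN₀⟩ := htail (ε / 2) (by linarith)
  refine ⟨2 * N₀ + 2, fun k hk => ?_⟩
  have hkN : 2 * N₀ + 2 ≤ k := hk
  have htail' : ∑' j, a (j + N₀) < ε / 2 := by
    have := hN₀ N₀ le_rfl
    rw [Real.dist_eq, sub_zero, abs_of_nonneg (tsum_nonneg fun j => h0 _)] at this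
    exact this
  -- partial tail sum bound
  set m := k - N₀ with hm
  have hmk : N₀ + m = k := by omega
  have h1 : (m : ℝ) * a k ≤ ∑ j ∈ range m, a (N₀ + j) := by
    have : ∀ j ∈ range m, a k ≤ a (N₀ + j) := fun j hj => by
      refine hAnti ?_
      have := mem_range.mp hj
      omega
    calc (m : ℝ) * a k = ∑ _j ∈ range m, a k := by
          rw [Finset.sum_const, card_range, nsmul_eq_mul]
      _ ≤ ∑ j ∈ range m, a (N₀ + j) := Finset.sum_le_sum this
  have h2 : ∑ j ∈ range m, a (N₀ + j) ≤ ∑' j, a (j + N₀) := by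
    have hs2 : Summable (fun j => a (j + N₀)) := (summable_nat_add_iff N₀).mpr hsum
    have := Summable.sum_le_tsum (range m) (fun j _ => h0 _) hs2
    simpa [Nat.add_comm] using this
  have h3 : (m : ℝ) * a k < ε / 2 := lt_of_le_of_lt (h1.trans h2) htail'
  have hk2 : (k : ℝ) ≤ 2 * m := by
    have : k ≤ 2 * m := by omega
    exact_mod_cast this
  rw [Real.dist_eq, sub_zero, abs_of_nonneg (mul_nonneg (Nat.cast_nonneg k) (h0 k))]
  calc (k : ℝ) * a k ≤ (2 * m) * a k := mul_le_mul_of_nonneg_right hk2 (h0 k)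
    _ = 2 * ((m : ℝ) * a k) := by ring
    _ < 2 * (ε / 2) := by linarith
    _ = ε := by ring

/-- The companion sequence of iterated integrals. -/
noncomputable def Aseq (μ : Measure ℝ) (g : ℝ → ℝ → ℝ) (lam : ℝ) : ℕ → ℝ → ℝ → ℝ
  | 0 => fun _ _ => 1
  | (k + 1) => fun x s => s / (s + lam) * ∫ y, Aseq μ g lam k x (s + g x y) ∂μ

lemma Aseq_meas (μ : Measure ℝ) [IsProbabilityMeasure μ] {g : ℝ → ℝ → ℝ}
    (hgmeas : Measurable (Function.uncurry g)) (lam : ℝ) (k : ℕ) :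
    Measurable (fun p : ℝ × ℝ => Aseq μ g lam k p.1 p.2) := by
  induction k with
  | zero => simpa [Aseq] using measurable_const
  | succ k ih =>
    show Measurable fun p : ℝ × ℝ =>
      p.2 / (p.2 + lam) * ∫ y, Aseq μ g lam k p.1 (p.2 + g p.1 y) ∂μ
    apply Measurable.mul
    · exact measurable_snd.div (measurable_snd.add_const lam)
    · have hF : StronglyMeasurable fun q : (ℝ × ℝ) × ℝ =>
          Aseq μ g lam k q.1.1 (q.1.2 + g q.1.1 q.2) := by
        have : Measurable fun q : (ℝ × ℝ) × ℝ =>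
            (q.1.1, q.1.2 + g q.1.1 q.2) := by
          refine (measurable_fst.comp measurable_fst).prodMk ?_
          exact (measurable_snd.comp measurable_fst).add
            (hgmeas.comp ((measurable_fst.comp measurable_fst).prodMk measurable_snd))
        exact (ih.comp this).stronglyMeasurable
      exact (hF.integral_prod_right').measurable

lemma Aseq_nonneg (μ : Measure ℝ) [IsProbabilityMeasure μ] {g : ℝ → ℝ → ℝ} {lam : ℝ}
    (hg0 : ∀ x y, 0 ≤ g x y) (hlam : 0 < lam) (k : ℕ) :
    ∀ x s, 0 ≤ s → 0 ≤ Aseq μ g lam k x s := by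
  induction k with
  | zero => intro x s _; simp [Aseq]
  | succ k ih =>
    intro x s hs
    show 0 ≤ s / (s + lam) * ∫ y, Aseq μ g lam k x (s + g x y) ∂μ
    apply mul_nonneg
    · positivity
    · exact integral_nonneg fun y => ih x _ (by have := hg0 x y; linarith)

lemma Aseq_le_one (μ : Measure ℝ) [IsProbabilityMeasure μ] {g : ℝ → ℝ → ℝ} {lam : ℝ}
    (hgmeas : Measurable (Function.uncurry g))
    (hg0 : ∀ x y, 0 ≤ g x y) (hlam : 0 < lam) (k : ℕ) :
    ∀ x s, 0 ≤ s → Aseq μ g lam k x s ≤ 1 := by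
  induction k with
  | zero => intro x s _; simp [Aseq]
  | succ k ih =>
    intro x s hs
    show s / (s + lam) * ∫ y, Aseq μ g lam k x (s + g x y) ∂μ ≤ 1
    have h1 : s / (s + lam) ≤ 1 := by
      rw [div_le_one (by linarith)]; linarith
    have h2 : ∫ y, Aseq μ g lam k x (s + g x y) ∂μ ≤ 1 := by
      have hint : Integrable (fun y => Aseq μ g lam k x (s + g x y)) μ := by
        refine aux_integrable_of_bounds ?_ (C := 1) ?_
        · exact ((Aseq_meas μ hgmeas lam k).comp
            (measurable_const.prodMk (measurable_const.add
              (hgmeas.comp (measurable_const.prodMk measurable_id))))).aestronglyMeasurable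
        · intro y
          rw [abs_le]
          constructor
          · linarith [Aseq_nonneg μ hg0 hlam k x (s + g x y) (by have := hg0 x y; linarith)]
          · exact ih x _ (by have := hg0 x y; linarith)
      calc ∫ y, Aseq μ g lam k x (s + g x y) ∂μ
          ≤ ∫ _y, (1 : ℝ) ∂μ := by
            refine integral_mono hint (integrable_const 1) fun y => ?_
            exact ih x _ (by have := hg0 x y; linarith)
        _ = 1 := by simp
    calc s / (s + lam) * ∫ y, Aseq μ g lam k x (s + g x y) ∂μ
        ≤ 1 * 1 := by
          apply mul_le_mul h1 h2 ?_ zero_le_one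
          exact integral_nonneg fun y =>
            Aseq_nonneg μ hg0 hlam k x _ (by have := hg0 x y; linarith)
      _ = 1 := by ring
/-- The integrand on the finite product space. -/
noncomputable def Fprod (g : ℝ → ℝ → ℝ) (lam : ℝ) (k : ℕ) (x s : ℝ) (v : Fin k → ℝ) : ℝ :=
  ∏ i : Fin k, ((s + ∑ j : Fin k, if (j : ℕ) < (i : ℕ) then g x (v j) else 0) /
    ((s + ∑ j : Fin k, if (j : ℕ) < (i : ℕ) then g x (v j) else 0) + lam))

lemma phi_nonneg {t lam : ℝ} (ht : 0 ≤ t) (hlam : 0 < lam) : 0 ≤ t / (t + lam) := by positivity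

lemma phi_le_one {t lam : ℝ} (ht : 0 ≤ t) (hlam : 0 < lam) : t / (t + lam) ≤ 1 := by
  rw [div_le_one (by linarith)]; linarith

lemma Fprod_nonneg {g : ℝ → ℝ → ℝ} {lam : ℝ} (hg0 : ∀ x y, 0 ≤ g x y) (hlam : 0 < lam)
    (k : ℕ) (x : ℝ) {s : ℝ} (hs : 0 ≤ s) (v : Fin k → ℝ) : 0 ≤ Fprod g lam k x s v := by
  refine Finset.prod_nonneg fun i _ => phi_nonneg ?_ hlam
  have : (0:ℝ) ≤ ∑ j : Fin k, if (j : ℕ) < (i : ℕ) then g x (v j) else 0 :=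
    Finset.sum_nonneg fun j _ => by split_ifs; exacts [hg0 x (v j), le_rfl]
  linarith

lemma Fprod_le_one {g : ℝ → ℝ → ℝ} {lam : ℝ} (hg0 : ∀ x y, 0 ≤ g x y) (hlam : 0 < lam)
    (k : ℕ) (x : ℝ) {s : ℝ} (hs : 0 ≤ s) (v : Fin k → ℝ) : Fprod g lam k x s v ≤ 1 := by
  refine Finset.prod_le_one (fun i _ => phi_nonneg ?_ hlam) (fun i _ => phi_le_one ?_ hlam) <;>
  · have : (0:ℝ) ≤ ∑ j : Fin k, if (j : ℕ) < (i : ℕ) then g x (v j) else 0 :=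
      Finset.sum_nonneg fun j _ => by split_ifs; exacts [hg0 x (v j), le_rfl]
    linarith

lemma Fprod_meas {g : ℝ → ℝ → ℝ} (hgmeas : Measurable (Function.uncurry g)) (lam : ℝ)
    (k : ℕ) (x s : ℝ) : Measurable (Fprod g lam k x s) := by
  apply Finset.measurable_prod
  intro i _
  have hnum : Measurable fun v : Fin k → ℝ =>
      s + ∑ j : Fin k, if (j : ℕ) < (i : ℕ) then g x (v j) else 0 := by
    apply measurable_const.add
    apply Finset.measurable_sum
    intro j _
    by_cases hc : (j : ℕ) < (i : ℕ)
    · simp only [if_pos hc]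
      exact hgmeas.comp (measurable_const.prodMk (measurable_pi_apply j))
    · simp only [if_neg hc]; exact measurable_const
  exact hnum.div (hnum.add_const lam)

/-- Core identity: the integral of `Fprod` over the product measure is `Aseq`. -/
lemma Fprod_integral (μ : Measure ℝ) [IsProbabilityMeasure μ] {g : ℝ → ℝ → ℝ} {lam : ℝ}
    (hgmeas : Measurable (Function.uncurry g)) (hg0 : ∀ x y, 0 ≤ g x y) (hlam : 0 < lam) :
    ∀ (k : ℕ) (x : ℝ) (s : ℝ), 0 ≤ s →
      ∫ v, Fprod g lam k x s v ∂(Measure.pi fun _ : Fin k => μ) = Aseq μ g lam k x s := by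
  intro k
  induction k with
  | zero =>
    intro x s _
    simp [Fprod, Aseq]
  | succ k ih =>
    intro x s hs
    have mp := measurePreserving_piFinSuccAbove (fun _ : Fin (k + 1) => μ) 0
    have key := (MeasurePreserving.symm _ mp).integral_comp' (f := (MeasurableEquiv.piFinSuccAbove (fun _ : Fin (k+1) => ℝ) 0).symm)
      (Fprod g lam (k+1) x s)
    rw [← key]
    have hpt : ∀ p : ℝ × (Fin k → ℝ),
        Fprod g lam (k+1) x s ((MeasurableEquiv.piFinSuccAbove (fun _ : Fin (k+1) => ℝ) 0).symm p)
          = s / (s + lam) * Fprod g lam k x (s + g x p.1) p.2 := by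
      rintro ⟨y, v⟩
      have he : ((MeasurableEquiv.piFinSuccAbove (fun _ : Fin (k+1) => ℝ) 0).symm (y, v))
          = Fin.cons y v := by
        simp [MeasurableEquiv.piFinSuccAbove, Fin.insertNthEquiv, Fin.insertNth_zero']
      rw [he]
      unfold Fprod
      rw [Fin.prod_univ_succ]
      congr 1
      · simp
      · apply Finset.prod_congr rfl
        intro i _
        have hsum : ∑ j : Fin (k+1), (if (j : ℕ) < ((i.succ : Fin (k+1)) : ℕ)
            then g x ((Fin.cons y v : Fin (k+1) → ℝ) j) else 0)
            = g x y + ∑ j : Fin k, if (j : ℕ) < (i : ℕ) then g x (v j) else 0 := by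
          rw [Fin.sum_univ_succ]
          congr 1
          · simp
        rw [hsum]
        ring_nf
    calc ∫ p, Fprod g lam (k+1) x s
            ((MeasurableEquiv.piFinSuccAbove (fun _ : Fin (k+1) => ℝ) 0).symm p)
            ∂(μ.prod (Measure.pi fun _ : Fin k => μ))
        = ∫ p : ℝ × (Fin k → ℝ), s / (s + lam) * Fprod g lam k x (s + g x p.1) p.2
            ∂(μ.prod (Measure.pi fun _ : Fin k => μ)) := by
          exact integral_congr_ae (Filter.Eventually.of_forall hpt)
      _ = ∫ y, ∫ v, s / (s + lam) * Fprod g lam k x (s + g x y) v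
            ∂(Measure.pi fun _ : Fin k => μ) ∂μ := by
          apply integral_prod
          apply aux_integrable_of_bounds (C := 1)
          · have hW : Measurable fun p : ℝ × (Fin k → ℝ) =>
                Fprod g lam (k+1) x s
                  ((MeasurableEquiv.piFinSuccAbove (fun _ : Fin (k+1) => ℝ) 0).symm p) :=
              (Fprod_meas hgmeas lam (k+1) x s).comp (MeasurableEquiv.measurable _)
            have heq : (fun p : ℝ × (Fin k → ℝ) =>
                s / (s + lam) * Fprod g lam k x (s + g x p.1) p.2) = fun p =>
                Fprod g lam (k+1) x s
                  ((MeasurableEquiv.piFinSuccAbove (fun _ : Fin (k+1) => ℝ) 0).symm p) := by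
              funext p; rw [hpt p]
            rw [heq]
            exact hW.aestronglyMeasurable
          · rintro ⟨y, v⟩
            have h1 : 0 ≤ s + g x y := by have := hg0 x y; linarith
            have f0 := Fprod_nonneg hg0 hlam k x h1 v
            have f1 := Fprod_le_one hg0 hlam k x h1 v
            have p0 := phi_nonneg hs hlam (lam := lam)
            have p1 := phi_le_one hs hlam (lam := lam)
            rw [abs_le]
            constructor
            · nlinarith
            · nlinarith
      _ = ∫ y, s / (s + lam) * Aseq μ g lam k x (s + g x y) ∂μ := by
          apply integral_congr_ae
          apply Filter.Eventually.of_forall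
          intro y
          show ∫ v, s / (s + lam) * Fprod g lam k x (s + g x y) v
              ∂(Measure.pi fun _ : Fin k => μ) = s / (s + lam) * Aseq μ g lam k x (s + g x y)
          rw [integral_const_mul, ih x (s + g x y) (by have := hg0 x y; linarith)]
      _ = Aseq μ g lam (k+1) x s := by
          rw [integral_const_mul]
          rfl
lemma Aseq_comp_integrable (μ : Measure ℝ) [IsProbabilityMeasure μ] {g : ℝ → ℝ → ℝ} {lam : ℝ}
    (hgmeas : Measurable (Function.uncurry g)) (hg0 : ∀ x y, 0 ≤ g x y) (hlam : 0 < lam)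
    (k : ℕ) (x : ℝ) {s : ℝ} (hs : 0 ≤ s) :
    Integrable (fun y => Aseq μ g lam k x (s + g x y)) μ := by
  refine aux_integrable_of_bounds ?_ (C := 1) ?_
  · exact ((Aseq_meas μ hgmeas lam k).comp
      (measurable_const.prodMk (measurable_const.add
        (hgmeas.comp (measurable_const.prodMk measurable_id))))).aestronglyMeasurable
  · intro y
    have h1 : 0 ≤ s + g x y := by have := hg0 x y; linarith
    rw [abs_le]
    exact ⟨by linarith [Aseq_nonneg μ hg0 hlam k x _ h1],
      Aseq_le_one μ hgmeas hg0 hlam k x _ h1⟩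

lemma Aseq_sum_le (μ : Measure ℝ) [IsProbabilityMeasure μ] {g : ℝ → ℝ → ℝ} {lam M J' : ℝ}
    (hgmeas : Measurable (Function.uncurry g)) (hg0 : ∀ x y, 0 ≤ g x y)
    (hgJ : ∀ x y, g x y ≤ J') (hlam : 0 < lam) (hMlam : M < lam)
    {x : ℝ} (hx : (∫ y, g x y ∂μ) ≤ M) :
    ∀ (N : ℕ) (s : ℝ), 0 ≤ s →
      ∑ k ∈ range N, Aseq μ g lam (k + 1) x s ≤ s / (lam - M) := by
  have hgint : Integrable (fun y => g x y) μ := by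
    refine aux_integrable_of_bounds (hgmeas.of_uncurry_left).aestronglyMeasurable (C := J') ?_
    intro y; rw [abs_of_nonneg (hg0 x y)]; exact hgJ x y
  intro N
  induction N with
  | zero =>
    intro s hs
    simp only [range_zero, Finset.sum_empty]
    have : 0 < lam - M := by linarith
    positivity
  | succ N ih =>
    intro s hs
    have hc : (0:ℝ) < lam - M := by linarith
    have hslam : (0:ℝ) < s + lam := by linarith
    have step1 : ∑ k ∈ range (N + 1), Aseq μ g lam (k + 1) x s
        = s / (s + lam) * ∫ y, (∑ k ∈ range (N + 1), Aseq μ g lam k x (s + g x y)) ∂μ := by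
      rw [integral_finset_sum _ (fun k _ => Aseq_comp_integrable μ hgmeas hg0 hlam k x hs)]
      rw [Finset.mul_sum]
      apply Finset.sum_congr rfl
      intro k _
      rfl
    rw [step1]
    have hbound : ∫ y, (∑ k ∈ range (N + 1), Aseq μ g lam k x (s + g x y)) ∂μ
        ≤ (s + lam) / (lam - M) := by
      have hI2 : Integrable (fun y => s + g x y) μ := by
        exact (integrable_const s).add hgint
      have hI : Integrable (fun y => (s + g x y) / (lam - M)) μ := by
        exact hI2.div_const (lam - M)
      have hmono : ∫ y, (∑ k ∈ range (N + 1), Aseq μ g lam k x (s + g x y)) ∂μ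
          ≤ ∫ y, (1 + (s + g x y) / (lam - M)) ∂μ := by
        refine integral_mono ?_ ?_ ?_
        · exact integrable_finset_sum _ (fun k _ => Aseq_comp_integrable μ hgmeas hg0 hlam k x hs)
        · exact (integrable_const 1).add hI
        · intro y
          have h1 : 0 ≤ s + g x y := by have := hg0 x y; linarith
          dsimp only
          rw [Finset.sum_range_succ']
          have h0 : Aseq μ g lam 0 x (s + g x y) = 1 := rfl
          rw [h0]
          have := ih (s + g x y) h1
          linarith
      have hcomp : ∫ y, (1 + (s + g x y) / (lam - M)) ∂μ
          = 1 + (s + ∫ y, g x y ∂μ) / (lam - M) := by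
        rw [integral_add (integrable_const 1) hI, integral_div,
          integral_add (integrable_const s) hgint]
        simp
      rw [hcomp] at hmono
      have h2 : (s + ∫ y, g x y ∂μ) / (lam - M) ≤ (s + M) / (lam - M) :=
        (div_le_div_iff_of_pos_right hc).mpr (by linarith)
      have h3 : 1 + (s + M) / (lam - M) = (s + lam) / (lam - M) := by
        field_simp
        ring
      linarith
    have hphi0 : 0 ≤ s / (s + lam) := by positivity
    calc s / (s + lam) * ∫ y, (∑ k ∈ range (N + 1), Aseq μ g lam k x (s + g x y)) ∂μ
        ≤ s / (s + lam) * ((s + lam) / (lam - M)) := by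
          apply mul_le_mul_of_nonneg_left hbound hphi0
      _ = s / (lam - M) := by field_simp
lemma Fprod_meas' {g : ℝ → ℝ → ℝ} (hgmeas : Measurable (Function.uncurry g)) (lam : ℝ)
    (k : ℕ) : Measurable (fun p : ℝ × ℝ × (Fin k → ℝ) => Fprod g lam k p.1 p.2.1 p.2.2) := by
  apply Finset.measurable_prod
  intro i _
  have hnum : Measurable fun p : ℝ × ℝ × (Fin k → ℝ) =>
      p.2.1 + ∑ j : Fin k, if (j : ℕ) < (i : ℕ) then g p.1 (p.2.2 j) else 0 := by
    apply (measurable_fst.comp measurable_snd).add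
    apply Finset.measurable_sum
    intro j _
    by_cases hc : (j : ℕ) < (i : ℕ)
    · simp only [if_pos hc]
      exact hgmeas.comp (measurable_fst.prodMk
        ((measurable_pi_apply j).comp (measurable_snd.comp measurable_snd)))
    · simp only [if_neg hc]; exact measurable_const
  exact hnum.div (hnum.add_const lam)

/-- The joint law of finitely many of the `W i` is the product measure. -/
lemma aux_map_pi {Ω : Type*} [MeasurableSpace Ω] (P : Measure Ω) [IsProbabilityMeasure P]
    (μ : Measure ℝ) [IsProbabilityMeasure μ]
    (W : ℕ → Ω → ℝ) (hWmeas : ∀ i, Measurable (W i))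
    (hWid : ∀ i, P.map (W i) = μ)
    (hWindep : ProbabilityTheory.iIndepFun W P) (n : ℕ) :
    P.map (fun ω (i : Fin n) => W i ω) = Measure.pi (fun _ : Fin n => μ) := by
  classical
  symm
  apply Measure.pi_eq
  intro s hs
  have hT : Measurable (fun ω (i : Fin n) => W i ω) :=
    measurable_pi_lambda _ fun i => hWmeas i
  rw [Measure.map_apply hT (MeasurableSet.univ_pi hs)]
  set sets : ℕ → Set ℝ := fun i => if hi : i < n then s ⟨i, hi⟩ else Set.univ with hsets
  have hpre : (fun ω (i : Fin n) => W i ω) ⁻¹' (Set.univ.pi s)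
      = ⋂ i ∈ Finset.range n, W i ⁻¹' sets i := by
    ext ω
    simp only [Set.mem_preimage, Set.mem_pi, Set.mem_univ, forall_true_left,
      Set.mem_iInter, Finset.mem_range, hsets]
    constructor
    · intro hω i hi
      rw [dif_pos hi]
      exact hω ⟨i, hi⟩
    · intro hω i
      have := hω (i : ℕ) i.isLt
      rwa [dif_pos i.isLt, Fin.eta] at this
  rw [hpre]
  have hmeas : ∀ i, i ∈ Finset.range n → MeasurableSet (sets i) := by
    intro i _
    rw [hsets]
    dsimp only
    split_ifs with hi
    · exact hs ⟨i, hi⟩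
    · exact MeasurableSet.univ
  rw [hWindep.measure_inter_preimage_eq_mul (Finset.range n) hmeas]
  rw [← Fin.prod_univ_eq_prod_range (fun i => P (W i ⁻¹' sets i)) n]
  apply Finset.prod_congr rfl
  intro i _
  have h1 : sets (i : ℕ) = s i := by
    rw [hsets]; dsimp only; rw [dif_pos i.isLt, Fin.eta]
  rw [h1, ← hWid (i : ℕ), Measure.map_apply (hWmeas i) (hs i)]

/-- Claim 2.13.1: with the companion process `S_i(W)` started from a `μ`-random weight
`W = W₀`, if `g` and `h` are bounded by `J'` and `λ* > g̃₊ := sup_x E[g(x,W)]`, then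
`k · E[∏_{i=0}^{k-1} S_i(W)/(S_i(W)+λ*)] → 0` as `k → ∞`. -/
theorem k_times_tail_product_tendsto_zero
    {Ω : Type*} [MeasurableSpace Ω] (P : Measure Ω) [IsProbabilityMeasure P]
    (wstar : ℝ) (μ : Measure ℝ) [IsProbabilityMeasure μ]
    (hsupp : ∀ᵐ x ∂μ, x ∈ Set.Icc 0 wstar)
    (g : ℝ → ℝ → ℝ) (h : ℝ → ℝ) (J' : ℝ)
    (hgmeas : Measurable (Function.uncurry g)) (hhmeas : Measurable h)
    (hg0 : ∀ x y, 0 ≤ g x y) (hgJ : ∀ x y, g x y ≤ J')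
    (hh0 : ∀ x, 0 ≤ h x) (hhJ : ∀ x, h x ≤ J')
    (W : ℕ → Ω → ℝ) (hWmeas : ∀ i, Measurable (W i))
    (hWid : ∀ i, P.map (W i) = μ)
    (hWindep : ProbabilityTheory.iIndepFun W P)
    (gtilde : ℝ → ℝ) (hgtilde : ∀ x, gtilde x = ∫ y, g x y ∂μ)
    (S : ℕ → Ω → ℝ)
    (hS : ∀ i ω, S i ω = h (W 0 ω) + ∑ j ∈ Finset.range i, g (W 0 ω) (W (j + 1) ω))
    (lamStar : ℝ)
    (hsup_pos : 0 < sSup (gtilde '' Set.Icc 0 wstar))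
    (hlam : sSup (gtilde '' Set.Icc 0 wstar) < lamStar) :
    Tendsto (fun k : ℕ => (k : ℝ) *
        ∫ ω, ∏ i ∈ Finset.range k, S i ω / (S i ω + lamStar) ∂P)
      atTop (nhds 0) := by
  classical
  set M := sSup (gtilde '' Set.Icc 0 wstar) with hM
  have hlam0 : 0 < lamStar := lt_trans hsup_pos hlam
  have hMlam : M < lamStar := hlam
  have hJ'0 : (0:ℝ) ≤ J' := le_trans (hh0 0) (hhJ 0)
  have hgint : ∀ x, Integrable (fun y => g x y) μ := fun x =>
    aux_integrable_of_bounds (hgmeas.of_uncurry_left).aestronglyMeasurable (C := J')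
      (fun y => by rw [abs_of_nonneg (hg0 x y)]; exact hgJ x y)
  have hgtJ : ∀ x, gtilde x ≤ J' := by
    intro x; rw [hgtilde]
    calc ∫ y, g x y ∂μ ≤ ∫ _y, J' ∂μ := integral_mono (hgint x) (integrable_const J') (hgJ x)
      _ = J' := by simp
  have hbdd : BddAbove (gtilde '' Set.Icc 0 wstar) := ⟨J', by rintro z ⟨x, -, rfl⟩; exact hgtJ x⟩
  have hae : ∀ᵐ x ∂μ, (∫ y, g x y ∂μ) ≤ M := by
    filter_upwards [hsupp] with x hx
    rw [← hgtilde]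
    exact le_csSup hbdd (Set.mem_image_of_mem _ hx)
  have hS0 : ∀ i ω, 0 ≤ S i ω := by
    intro i ω; rw [hS]
    exact add_nonneg (hh0 _) (Finset.sum_nonneg fun j _ => hg0 _ _)
  have hSmeas : ∀ i, Measurable (S i) := by
    intro i
    have hrw : S i = fun ω => h (W 0 ω) + ∑ j ∈ range i, g (W 0 ω) (W (j + 1) ω) :=
      funext (hS i)
    rw [hrw]
    refine (hhmeas.comp (hWmeas 0)).add ?_
    exact Finset.measurable_sum _ fun j _ =>
      hgmeas.comp ((hWmeas 0).prodMk (hWmeas (j + 1)))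
  set p : ℕ → Ω → ℝ := fun k ω => ∏ i ∈ range k, S i ω / (S i ω + lamStar) with hp
  have hpmeas : ∀ k, Measurable (p k) := fun k =>
    Finset.measurable_prod _ fun i _ => (hSmeas i).div ((hSmeas i).add_const _)
  have hp0 : ∀ k ω, 0 ≤ p k ω := fun k ω =>
    Finset.prod_nonneg fun i _ => phi_nonneg (hS0 i ω) hlam0
  have hp1 : ∀ k ω, p k ω ≤ 1 := fun k ω =>
    Finset.prod_le_one (fun i _ => phi_nonneg (hS0 i ω) hlam0)
      (fun i _ => phi_le_one (hS0 i ω) hlam0)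
  have hpint : ∀ k, Integrable (p k) P := fun k =>
    aux_integrable_of_bounds (hpmeas k).aestronglyMeasurable (C := 1)
      (fun ω => by rw [abs_le]; exact ⟨by linarith [hp0 k ω], hp1 k ω⟩)
  set I : ℕ → ℝ := fun k => ∫ ω, p k ω ∂P with hIdef
  -- the identity with the iterated integral sequence
  have hId : ∀ k, I k = ∫ x, Aseq μ g lamStar k x (h x) ∂μ := by
    intro k
    set G : (Fin (k + 1) → ℝ) → ℝ :=
      fun w => Fprod g lamStar k (w 0) (h (w 0)) (fun j : Fin k => w j.succ) with hG
    have hGmeas : Measurable G := by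
      rw [hG]
      have hmap : Measurable (fun w : Fin (k + 1) → ℝ =>
          (w 0, (h (w 0), fun j : Fin k => w j.succ))) := by
        refine Measurable.prodMk (measurable_pi_apply 0) (Measurable.prodMk ?_ ?_)
        · exact hhmeas.comp (measurable_pi_apply 0)
        · exact measurable_pi_lambda _ fun j => measurable_pi_apply j.succ
      exact (Fprod_meas' hgmeas lamStar k).comp hmap
    have hT : Measurable (fun ω (i : Fin (k + 1)) => W i ω) :=
      measurable_pi_lambda _ fun i => hWmeas i
    have claimA : ∀ ω, G (fun i : Fin (k + 1) => W i ω) = p k ω := by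
      intro ω
      have hsum : ∀ m : ℕ, m ≤ k →
          (∑ j : Fin k, if (j : ℕ) < m then g (W 0 ω) (W ((j : ℕ) + 1) ω) else 0)
            = ∑ j ∈ range m, g (W 0 ω) (W (j + 1) ω) := by
        intro m hm
        rw [Fin.sum_univ_eq_sum_range (fun j => if j < m then g (W 0 ω) (W (j + 1) ω) else 0) k]
        rw [← Finset.sum_filter]
        congr 1
        ext a
        simp only [Finset.mem_filter, Finset.mem_range]
        omega
      show Fprod g lamStar k (W 0 ω) (h (W 0 ω)) (fun j : Fin k => W ((j.succ : Fin (k+1)) : ℕ) ω) = p k ω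
      unfold Fprod
      have hfac : ∀ i : Fin k,
          ((h (W 0 ω) + ∑ j : Fin k, if (j : ℕ) < (i : ℕ) then g (W 0 ω) (W (((j.succ : Fin (k+1))) : ℕ) ω) else 0) /
            ((h (W 0 ω) + ∑ j : Fin k, if (j : ℕ) < (i : ℕ) then g (W 0 ω) (W (((j.succ : Fin (k+1))) : ℕ) ω) else 0) + lamStar))
          = S (i : ℕ) ω / (S (i : ℕ) ω + lamStar) := by
        intro i
        have : (∑ j : Fin k, if (j : ℕ) < (i : ℕ) then g (W 0 ω) (W (((j.succ : Fin (k+1))) : ℕ) ω) else 0)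
            = ∑ j ∈ range (i : ℕ), g (W 0 ω) (W (j + 1) ω) := by
          rw [← hsum (i : ℕ) (le_of_lt i.isLt)]
          apply Finset.sum_congr rfl
          intro j _
          simp [Fin.val_succ]
        rw [this, ← hS (i : ℕ) ω]
      calc (∏ i : Fin k,
            ((h (W 0 ω) + ∑ j : Fin k, if (j : ℕ) < (i : ℕ) then g (W 0 ω) (W (((j.succ : Fin (k+1))) : ℕ) ω) else 0) /
              ((h (W 0 ω) + ∑ j : Fin k, if (j : ℕ) < (i : ℕ) then g (W 0 ω) (W (((j.succ : Fin (k+1))) : ℕ) ω) else 0) + lamStar)))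
          = ∏ i : Fin k, S (i : ℕ) ω / (S (i : ℕ) ω + lamStar) :=
            Finset.prod_congr rfl fun i _ => hfac i
        _ = p k ω := Fin.prod_univ_eq_prod_range (fun i => S i ω / (S i ω + lamStar)) k
    have step1 : I k = ∫ w, G w ∂(Measure.pi fun _ : Fin (k + 1) => μ) := by
      rw [← aux_map_pi P μ W hWmeas hWid hWindep (k + 1)]
      rw [integral_map hT.aemeasurable hGmeas.aestronglyMeasurable]
      rw [hIdef]
      exact (integral_congr_ae (Filter.Eventually.of_forall fun ω => (claimA ω))).symm
    rw [step1]
    -- now decompose the product measure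
    have mp := measurePreserving_piFinSuccAbove (fun _ : Fin (k + 1) => μ) 0
    have key := (MeasurePreserving.symm _ mp).integral_comp'
      (f := (MeasurableEquiv.piFinSuccAbove (fun _ : Fin (k + 1) => ℝ) 0).symm) G
    rw [← key]
    have hpt : ∀ q : ℝ × (Fin k → ℝ),
        G ((MeasurableEquiv.piFinSuccAbove (fun _ : Fin (k + 1) => ℝ) 0).symm q)
          = Fprod g lamStar k q.1 (h q.1) q.2 := by
      rintro ⟨x, v⟩
      have he : ((MeasurableEquiv.piFinSuccAbove (fun _ : Fin (k + 1) => ℝ) 0).symm (x, v))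
          = Fin.cons x v := by
        simp [MeasurableEquiv.piFinSuccAbove, Fin.insertNthEquiv, Fin.insertNth_zero']
      rw [he, hG]
      simp only [Fin.cons_zero, Fin.cons_succ]
    calc ∫ q, G ((MeasurableEquiv.piFinSuccAbove (fun _ : Fin (k + 1) => ℝ) 0).symm q)
            ∂(μ.prod (Measure.pi fun _ : Fin k => μ))
        = ∫ q : ℝ × (Fin k → ℝ), Fprod g lamStar k q.1 (h q.1) q.2
            ∂(μ.prod (Measure.pi fun _ : Fin k => μ)) :=
          integral_congr_ae (Filter.Eventually.of_forall hpt)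
      _ = ∫ x, ∫ v, Fprod g lamStar k x (h x) v ∂(Measure.pi fun _ : Fin k => μ) ∂μ := by
          apply integral_prod
          refine aux_integrable_of_bounds ?_ (C := 1) ?_
          · have : Measurable fun q : ℝ × (Fin k → ℝ) =>
                G ((MeasurableEquiv.piFinSuccAbove (fun _ : Fin (k + 1) => ℝ) 0).symm q) :=
              hGmeas.comp (MeasurableEquiv.measurable _)
            have heq : (fun q : ℝ × (Fin k → ℝ) => Fprod g lamStar k q.1 (h q.1) q.2)
                = fun q => G ((MeasurableEquiv.piFinSuccAbove (fun _ : Fin (k + 1) => ℝ) 0).symm q) := by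
              funext q; rw [hpt q]
            rw [heq]
            exact this.aestronglyMeasurable
          · rintro ⟨x, v⟩
            rw [abs_le]
            exact ⟨by linarith [Fprod_nonneg hg0 hlam0 k x (hh0 x) v],
              Fprod_le_one hg0 hlam0 k x (hh0 x) v⟩
      _ = ∫ x, Aseq μ g lamStar k x (h x) ∂μ := by
          apply integral_congr_ae
          apply Filter.Eventually.of_forall
          intro x
          dsimp only
          exact Fprod_integral μ hgmeas hg0 hlam0 k x (h x) (hh0 x)
  -- basic properties of I
  have hInn : ∀ k, 0 ≤ I k := fun k => integral_nonneg fun ω => hp0 k ω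
  have hIanti : ∀ k, I (k + 1) ≤ I k := by
    intro k
    apply integral_mono (hpint (k + 1)) (hpint k)
    intro ω
    have hfac0 : 0 ≤ S k ω / (S k ω + lamStar) := phi_nonneg (hS0 k ω) hlam0
    have hfac1 : S k ω / (S k ω + lamStar) ≤ 1 := phi_le_one (hS0 k ω) hlam0
    show p (k + 1) ω ≤ p k ω
    rw [hp]
    dsimp only
    rw [Finset.prod_range_succ]
    calc (∏ i ∈ range k, S i ω / (S i ω + lamStar)) * (S k ω / (S k ω + lamStar))
        ≤ (∏ i ∈ range k, S i ω / (S i ω + lamStar)) * 1 :=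
          mul_le_mul_of_nonneg_left hfac1 (hp0 k ω)
      _ = p k ω := by rw [mul_one]
  -- integrability of the Aseq integrands
  have hAint : ∀ k, Integrable (fun x => Aseq μ g lamStar k x (h x)) μ := by
    intro k
    refine aux_integrable_of_bounds ?_ (C := 1) ?_
    · exact ((Aseq_meas μ hgmeas lamStar k).comp
        (measurable_id.prodMk hhmeas)).aestronglyMeasurable
    · intro x
      rw [abs_le]
      exact ⟨by linarith [Aseq_nonneg μ hg0 hlam0 k x (h x) (hh0 x)],
        Aseq_le_one μ hgmeas hg0 hlam0 k x (h x) (hh0 x)⟩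
  -- partial sums bounded
  have hsumb : ∀ N, ∑ k ∈ range N, I k ≤ 1 + J' / (lamStar - M) := by
    intro N
    have hmono : ∑ k ∈ range N, I k ≤ ∑ k ∈ range (N + 1), I k := by
      rw [Finset.sum_range_succ]
      linarith [hInn N]
    refine le_trans hmono ?_
    have hc : (0:ℝ) < lamStar - M := by linarith
    calc ∑ k ∈ range (N + 1), I k
        = ∑ k ∈ range (N + 1), ∫ x, Aseq μ g lamStar k x (h x) ∂μ :=
          Finset.sum_congr rfl fun k _ => hId k
      _ = ∫ x, (∑ k ∈ range (N + 1), Aseq μ g lamStar k x (h x)) ∂μ :=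
          (integral_finset_sum _ fun k _ => hAint k).symm
      _ ≤ ∫ _x, (1 + J' / (lamStar - M)) ∂μ := by
          refine integral_mono_ae
            (integrable_finset_sum _ fun k _ => hAint k) (integrable_const _) ?_
          filter_upwards [hae] with x hx
          rw [Finset.sum_range_succ']
          have h0 : Aseq μ g lamStar 0 x (h x) = 1 := rfl
          rw [h0]
          have hb := Aseq_sum_le μ hgmeas hg0 hgJ hlam0 hMlam hx N (h x) (hh0 x)
          have hd : h x / (lamStar - M) ≤ J' / (lamStar - M) :=
            (div_le_div_iff_of_pos_right hc).mpr (hhJ x)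
          linarith
      _ = 1 + J' / (lamStar - M) := by simp
  exact aux_tendsto_nat_mul I hInn hIanti _ hsumb
end
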